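/- Let d ≥ 1, q ∈ (ℕ₊)^d with all qᵢ even, and let V_q be the potential defined by V_q(n) = (1−δ²/d)δ if n ≡ 0 mod q and δ(−1)^{|n|} otherwise. There exists δ₀ > 0 such that for all 0 < δ < δ₀ and all unit vectors u ∈ ℓ²(ℤ^d): ‖(H₀ + V_q)u‖ > δ/2. In particular, 0 is not in the spectrum of H₀ + V_q. -/

import Mathlib

private lemma aux_flip (k : ℤ) : ((-1 : ℝ)) ^ ((k + 1).natAbs) = -((-1 : ℝ)) ^ (k.natAbs) := by
  rcases Int.even_or_odd k with h | h
  · rw [Odd.neg_one_pow (Int.natAbs_odd.mpr h.add_one), Even.neg_one_pow (Int.natAbs_even.mpr h)]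
  · rw [Even.neg_one_pow (Int.natAbs_even.mpr h.add_one), Odd.neg_one_pow (Int.natAbs_odd.mpr h)]
    ring

private lemma eps_flip {d : ℕ} (n : Fin d → ℤ) (i : Fin d) :
    ((-1 : ℝ)) ^ (∑ j, ((n + (Pi.single i 1 : Fin d → ℤ)) j).natAbs)
      = -((-1 : ℝ)) ^ (∑ j, (n j).natAbs) := by
  have h1 : ∀ j, ((n + (Pi.single i 1 : Fin d → ℤ)) j).natAbs
      = Function.update (fun j => (n j).natAbs) i ((n i + 1).natAbs) j := by
    intro j
    rcases eq_or_ne j i with rfl | hj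
    · simp [Function.update]
    · simp [Function.update, hj, Pi.single_apply]
  have h2 : ∑ j, ((n + (Pi.single i 1 : Fin d → ℤ)) j).natAbs
      = (n i + 1).natAbs + ∑ j ∈ Finset.univ \ {i}, (n j).natAbs := by
    rw [Finset.sum_congr rfl fun j _ => h1 j]
    exact Finset.sum_update_of_mem (Finset.mem_univ i) _ _
  have h3 : ∑ j, (n j).natAbs
      = (n i).natAbs + ∑ j ∈ Finset.univ \ {i}, (n j).natAbs := by
    conv_lhs => rw [← Function.update_eq_self i (fun j => (n j).natAbs)]
    exact Finset.sum_update_of_mem (Finset.mem_univ i) _ _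
  rw [h2, h3, pow_add, pow_add, aux_flip]
  ring

private lemma summable_abs_mul {ι : Type*} (f g : ι → ℝ)
    (hf : Summable fun n => (f n) ^ 2) (hg : Summable fun n => (g n) ^ 2) :
    Summable fun n => |f n * g n| := by
  refine Summable.of_nonneg_of_le (fun n => abs_nonneg _) (fun n => ?_)
    ((hf.add hg).div_const 2)
  rw [abs_mul]
  nlinarith [sq_nonneg (|f n| - |g n|), sq_abs (f n), sq_abs (g n),
    abs_nonneg (f n), abs_nonneg (g n)]

set_option maxHeartbeats 1000000 in
theorem stmt13 (d : ℕ) (hd : 1 ≤ d) (q : Fin d → ℕ+) (hq : ∀ i, Even (q i : ℕ)) :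
    ∃ δ₀ > (0 : ℝ), ∀ δ : ℝ, 0 < δ → δ < δ₀ →
      ∀ V : (Fin d → ℤ) → ℝ,
        (∀ n : Fin d → ℤ, V n =
          if ∀ i, ((q i : ℤ)) ∣ n i then (1 - δ^2 / d) * δ
          else δ * (-1 : ℝ) ^ (∑ i, (n i).natAbs)) →
      ∀ u : (Fin d → ℤ) → ℝ, Summable (fun n => (u n)^2) → (∑' n, (u n)^2) = 1 →
        Real.sqrt (∑' n : Fin d → ℤ,
          ((∑ i, (u (n + (Pi.single i 1 : Fin d → ℤ)) + u (n - (Pi.single i 1 : Fin d → ℤ))))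
            + V n * u n)^2) > δ / 2 := by
  refine ⟨1/10, by norm_num, ?_⟩
  intro δ hδ0 hδ V hV u hu hu1
  have hd1 : (1 : ℝ) ≤ (d : ℝ) := by exact_mod_cast hd
  have hdpos : (0 : ℝ) < (d : ℝ) := by linarith
  set ε : (Fin d → ℤ) → ℝ := fun n => (-1 : ℝ) ^ (∑ j, (n j).natAbs) with hε
  set A : (Fin d → ℤ) → ℝ := fun n =>
    ∑ i, (u (n + (Pi.single i 1 : Fin d → ℤ)) + u (n - (Pi.single i 1 : Fin d → ℤ))) with hA
  set W : (Fin d → ℤ) → ℝ := fun n =>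
    if ∀ i, ((q i : ℤ)) ∣ n i then -(δ ^ 3 / d) else 0 with hW
  -- ε is ±1, and equals 1 on the lattice
  have hε2 : ∀ n, ε n ^ 2 = 1 := by
    intro n
    rw [hε]
    rw [← pow_mul, mul_comm, pow_mul]
    norm_num
  have hεabs : ∀ n, |ε n| = 1 := by
    intro n
    have := hε2 n
    rcases abs_choice (ε n) with h | h <;> nlinarith [abs_nonneg (ε n)]
  have hεlat : ∀ n : Fin d → ℤ, (∀ i, ((q i : ℤ)) ∣ n i) → ε n = 1 := by
    intro n hn
    rw [hε]
    refine Even.neg_one_pow (Finset.even_sum _ fun i _ => ?_)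
    have hqe : Even ((q i : ℤ)) := by exact_mod_cast (hq i)
    have h2 : (2:ℤ) ∣ n i := dvd_trans hqe.two_dvd (hn i)
    exact Int.natAbs_even.mpr (even_iff_two_dvd.mpr h2)
  -- decomposition V = δ ε + W
  have hVdec : ∀ n, V n = δ * ε n + W n := by
    intro n
    rw [hV n]
    simp only [hW]
    by_cases h : ∀ i, ((q i : ℤ)) ∣ n i
    · rw [if_pos h, if_pos h, hεlat n h]
      field_simp
      ring
    · rw [if_neg h, if_neg h, add_zero]
  have hVabs : ∀ n, |V n| ≤ δ := by
    intro n
    rw [hV n]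
    by_cases h : ∀ i, ((q i : ℤ)) ∣ n i
    · rw [if_pos h]
      have h1 : 0 ≤ 1 - δ^2 / (d : ℝ) := by
        have : δ^2 / (d:ℝ) ≤ δ^2 := div_le_self (by positivity) hd1
        nlinarith
      rw [abs_of_nonneg (by nlinarith)]
      nlinarith [div_nonneg (sq_nonneg δ) hdpos.le]
    · rw [if_neg h]
      rw [abs_mul, abs_of_nonneg hδ0.le]
      have : |(-1 : ℝ) ^ (∑ i, (n i).natAbs)| = 1 := by
        rw [abs_pow, abs_neg, abs_one, one_pow]
      rw [this, mul_one]
  have hVlow : ∀ n, (1 - δ^2/d) * δ ≤ |V n| := by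
    intro n
    rw [hV n]
    by_cases h : ∀ i, ((q i : ℤ)) ∣ n i
    · rw [if_pos h]
      exact le_abs_self _
    · rw [if_neg h]
      rw [abs_mul, abs_of_nonneg hδ0.le]
      have h2 : |(-1 : ℝ) ^ (∑ i, (n i).natAbs)| = 1 := by
        rw [abs_pow, abs_neg, abs_one, one_pow]
      rw [h2, mul_one]
      have : δ^2 / (d:ℝ) ≤ δ^2 := div_le_self (by positivity) hd1
      nlinarith [mul_nonneg (div_nonneg (sq_nonneg δ) hdpos.le) hδ0.le]
  have hWabs : ∀ n, |W n| ≤ δ^3 / d := by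
    intro n
    simp only [hW]
    by_cases h : ∀ i, ((q i : ℤ)) ∣ n i
    · rw [if_pos h, abs_neg, abs_of_nonneg (by positivity)]
    · rw [if_neg h, abs_zero]; positivity
  -- shifted squares are summable with the same sum
  have hshift : ∀ c : Fin d → ℤ, Summable (fun n => (u (n + c))^2)
      ∧ (∑' n, (u (n + c))^2) = 1 := by
    intro c
    have he : (fun n => (u (n + c))^2) = (fun n => (u n)^2) ∘ (Equiv.addRight c) := by
      funext n; simp
    constructor
    · rw [he, (Equiv.addRight c).summable_iff]; exact hu
    · rw [he]
      have := (Equiv.addRight c).tsum_eq (fun n => (u n)^2)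
      simpa [Function.comp_def] using this.trans hu1
  -- summability of A^2 and bound on its sum
  set M : (Fin d → ℤ) → ℝ := fun n =>
    (d : ℝ) * ∑ i, (2 * ((u (n + (Pi.single i 1 : Fin d → ℤ)))^2
      + (u (n - (Pi.single i 1 : Fin d → ℤ)))^2)) with hM
  have hAM : ∀ n, A n ^ 2 ≤ M n := by
    intro n
    rw [hA, hM]
    calc (∑ i, (u (n + (Pi.single i 1 : Fin d → ℤ)) + u (n - (Pi.single i 1 : Fin d → ℤ))))^2
        ≤ (d : ℝ) * ∑ i, (u (n + (Pi.single i 1 : Fin d → ℤ))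
            + u (n - (Pi.single i 1 : Fin d → ℤ)))^2 := by
          have := sq_sum_le_card_mul_sum_sq (s := (Finset.univ : Finset (Fin d)))
            (f := fun i => u (n + (Pi.single i 1 : Fin d → ℤ))
              + u (n - (Pi.single i 1 : Fin d → ℤ)))
          simpa using this
      _ ≤ (d : ℝ) * ∑ i, (2 * ((u (n + (Pi.single i 1 : Fin d → ℤ)))^2
            + (u (n - (Pi.single i 1 : Fin d → ℤ)))^2)) := by
          refine mul_le_mul_of_nonneg_left (Finset.sum_le_sum fun i _ => ?_) hdpos.le
          nlinarith [sq_nonneg (u (n + (Pi.single i 1 : Fin d → ℤ))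
            - u (n - (Pi.single i 1 : Fin d → ℤ)))]
  have hMsummand : ∀ i : Fin d, Summable (fun n => 2 * ((u (n + (Pi.single i 1 : Fin d → ℤ)))^2
      + (u (n - (Pi.single i 1 : Fin d → ℤ)))^2)) := by
    intro i
    have h1 := (hshift (Pi.single i 1)).1
    have h2 := (hshift (-(Pi.single i 1))).1
    have h2' : Summable (fun n => (u (n - (Pi.single i 1 : Fin d → ℤ)))^2) := by
      simpa [sub_eq_add_neg] using h2
    exact ((h1.add h2').mul_left 2)
  have hMsum : Summable M := by
    rw [hM]
    exact (summable_sum (fun i _ => hMsummand i)).mul_left _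
  have hA2 : Summable (fun n => A n ^ 2) :=
    Summable.of_nonneg_of_le (fun n => sq_nonneg _) hAM hMsum
  have htM : (∑' n, M n) = 4 * d^2 := by
    rw [hM, tsum_mul_left, Summable.tsum_finsetSum (fun i _ => hMsummand i)]
    have : ∀ i : Fin d, (∑' n, 2 * ((u (n + (Pi.single i 1 : Fin d → ℤ)))^2
        + (u (n - (Pi.single i 1 : Fin d → ℤ)))^2)) = 4 := by
      intro i
      have h1 := hshift (Pi.single i 1)
      have h2 := hshift (-(Pi.single i 1))
      have h2s : Summable (fun n => (u (n - (Pi.single i 1 : Fin d → ℤ)))^2) := by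
        simpa [sub_eq_add_neg] using h2.1
      have h2t : (∑' n, (u (n - (Pi.single i 1 : Fin d → ℤ)))^2) = 1 := by
        have := h2.2
        simpa [sub_eq_add_neg] using this
      rw [tsum_mul_left, Summable.tsum_add h1.1 h2s, h1.2, h2t]
      norm_num
    rw [Finset.sum_congr rfl fun i _ => this i]
    simp
    ring
  have htA2 : (∑' n, A n ^ 2) ≤ 4 * d^2 := by
    rw [← htM]
    exact Summable.tsum_le_tsum hAM hA2 hMsum
  -- summability of |A u| and bound
  have hAU : Summable (fun n => |A n * u n|) := summable_abs_mul A u hA2 hu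
  have htAU : (∑' n, |A n * u n|) ≤ 2 * d := by
    have hpt : ∀ n, 4 * (d:ℝ) * |A n * u n| ≤ A n ^ 2 + 4 * d^2 * (u n)^2 := by
      intro n
      rw [abs_mul]
      nlinarith [sq_nonneg (|A n| - 2*(d:ℝ)*|u n|), sq_abs (A n), sq_abs (u n),
        abs_nonneg (A n), abs_nonneg (u n)]
    have hsum2 : Summable (fun n => A n ^ 2 + 4 * (d:ℝ)^2 * (u n)^2) :=
      hA2.add (hu.mul_left _)
    have h := Summable.tsum_le_tsum hpt ((hAU.mul_left (4 * (d:ℝ)))) hsum2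
    rw [tsum_mul_left, Summable.tsum_add hA2 (hu.mul_left _), tsum_mul_left, hu1] at h
    have h2 : 4 * (d:ℝ) * (∑' n, |A n * u n|) ≤ 8 * d^2 := by nlinarith
    nlinarith
  -- summability of products with ε u
  have hεu2 : Summable (fun n => (ε n * u n)^2) := by
    have : (fun n => (ε n * u n)^2) = fun n => (u n)^2 := by
      funext n; rw [mul_pow, hε2 n, one_mul]
    rw [this]; exact hu
  have hprod : ∀ c : Fin d → ℤ, Summable (fun n => ε n * u n * u (n + c)) := by
    intro c
    refine Summable.of_abs ?_
    have := summable_abs_mul (fun n => ε n * u n) (fun n => u (n + c)) hεu2 (hshift c).1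
    exact this
  have hprodsub : ∀ i : Fin d, Summable (fun n => ε n * u n
      * u (n - (Pi.single i 1 : Fin d → ℤ))) := by
    intro i
    have := hprod (-(Pi.single i 1 : Fin d → ℤ))
    simpa [sub_eq_add_neg] using this
  -- the key cancellation
  have hcross : (∑' n, ε n * u n * A n) = 0 := by
    have hre : (fun n => ε n * u n * A n) = fun n => ∑ i,
        (ε n * u n * u (n + (Pi.single i 1 : Fin d → ℤ))
          + ε n * u n * u (n - (Pi.single i 1 : Fin d → ℤ))) := by
      funext n
      rw [hA, Finset.mul_sum]
      exact Finset.sum_congr rfl fun i _ => by ring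
    rw [hre, Summable.tsum_finsetSum (fun i _ => ((hprod _).add (hprodsub i)))]
    refine Finset.sum_eq_zero fun i _ => ?_
    rw [Summable.tsum_add (hprod _) (hprodsub i)]
    have hkey : (∑' n, ε n * u n * u (n - (Pi.single i 1 : Fin d → ℤ)))
        = -∑' n, ε n * u n * u (n + (Pi.single i 1 : Fin d → ℤ)) := by
      have heq := (Equiv.addRight ((Pi.single i 1 : Fin d → ℤ))).tsum_eq
        (fun n => ε n * u n * u (n - (Pi.single i 1 : Fin d → ℤ)))
      rw [← heq]
      have : ∀ m : Fin d → ℤ, ε (m + (Pi.single i 1 : Fin d → ℤ))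
          * u (m + (Pi.single i 1 : Fin d → ℤ))
          * u (m + (Pi.single i 1 : Fin d → ℤ) - (Pi.single i 1 : Fin d → ℤ))
          = -(ε m * u m * u (m + (Pi.single i 1 : Fin d → ℤ))) := by
        intro m
        have hflip : ε (m + (Pi.single i 1 : Fin d → ℤ)) = -ε m := by
          rw [hε]; exact eps_flip m i
        rw [hflip, add_sub_cancel_right]
        ring
      calc (∑' m, ε ((Equiv.addRight ((Pi.single i 1 : Fin d → ℤ))) m)
            * u ((Equiv.addRight ((Pi.single i 1 : Fin d → ℤ))) m)
            * u ((Equiv.addRight ((Pi.single i 1 : Fin d → ℤ))) m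
                - (Pi.single i 1 : Fin d → ℤ)))
          = ∑' m, -(ε m * u m * u (m + (Pi.single i 1 : Fin d → ℤ))) := by
            refine tsum_congr fun m => ?_
            simpa using this m
        _ = -∑' m, ε m * u m * u (m + (Pi.single i 1 : Fin d → ℤ)) := tsum_neg
    rw [hkey]
    ring
  -- summability of remaining pieces
  have hεuA : Summable (fun n => ε n * u n * A n) := by
    refine Summable.of_abs ?_
    have := summable_abs_mul (fun n => ε n * u n) A hεu2 hA2
    simpa using this
  have hAVu : Summable (fun n => A n * (V n * u n)) := by
    refine Summable.of_abs ?_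
    refine Summable.of_nonneg_of_le (fun n => abs_nonneg _) (fun n => ?_)
      (hAU.mul_left δ)
    have : |A n * (V n * u n)| = |V n| * |A n * u n| := by
      rw [abs_mul, abs_mul, abs_mul]; ring
    rw [this]
    exact mul_le_mul_of_nonneg_right (hVabs n) (abs_nonneg _)
  have hAWu : Summable (fun n => A n * (W n * u n)) := by
    have hfe : (fun n => A n * (W n * u n))
        = fun n => A n * (V n * u n) - δ * (ε n * u n * A n) := by
      funext n
      rw [hVdec n]; ring
    rw [hfe]
    exact hAVu.sub (hεuA.mul_left δ)
  have hVu2 : Summable (fun n => (V n * u n)^2) := by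
    refine Summable.of_nonneg_of_le (fun n => sq_nonneg _) (fun n => ?_) (hu.mul_left (δ^2))
    have h1 : (V n * u n)^2 = V n ^2 * u n ^2 := by ring
    rw [h1]
    have h2 : V n ^ 2 ≤ δ ^ 2 := by
      nlinarith [hVabs n, sq_abs (V n), abs_nonneg (V n)]
    nlinarith [sq_nonneg (u n)]
  -- lower bound on ∑ (Vu)^2
  have hc0 : 0 ≤ 1 - δ^2/(d:ℝ) := by
    have : δ^2 / (d:ℝ) ≤ δ^2 := div_le_self (by positivity) hd1
    nlinarith
  have htVu2 : ((1 - δ^2/d) * δ)^2 ≤ ∑' n, (V n * u n)^2 := by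
    have hpt : ∀ n, ((1 - δ^2/d) * δ)^2 * (u n)^2 ≤ (V n * u n)^2 := by
      intro n
      have h1 : (V n * u n)^2 = V n^2 * u n^2 := by ring
      rw [h1]
      have h2 : ((1 - δ^2/d) * δ)^2 ≤ V n ^ 2 := by
        nlinarith [hVlow n, sq_abs (V n), abs_nonneg (V n), mul_nonneg hc0 hδ0.le]
      nlinarith [sq_nonneg (u n)]
    have := Summable.tsum_le_tsum hpt (hu.mul_left _) hVu2
    rwa [tsum_mul_left, hu1, mul_one] at this
  -- lower bound on ∑ A (W u)
  have htAWu : -(2 * δ^3) ≤ ∑' n, A n * (W n * u n) := by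
    have hpt : ∀ n, -(δ^3/d * |A n * u n|) ≤ A n * (W n * u n) := by
      intro n
      have h1 : |A n * (W n * u n)| ≤ δ^3/d * |A n * u n| := by
        have : |A n * (W n * u n)| = |W n| * |A n * u n| := by
          rw [abs_mul, abs_mul, abs_mul]; ring
        rw [this]
        exact mul_le_mul_of_nonneg_right (hWabs n) (abs_nonneg _)
      nlinarith [neg_abs_le (A n * (W n * u n))]
    have hs : Summable (fun n => -(δ^3/(d:ℝ) * |A n * u n|)) :=
      ((hAU.mul_left (δ^3/(d:ℝ)))).neg
    have h := Summable.tsum_le_tsum hpt hs hAWu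
    have h2 : (∑' n, -(δ^3/(d:ℝ) * |A n * u n|)) = -(δ^3/(d:ℝ) * ∑' n, |A n * u n|) := by
      rw [tsum_neg, tsum_mul_left]
    rw [h2] at h
    have h3 : δ^3/(d:ℝ) * (∑' n, |A n * u n|) ≤ δ^3/(d:ℝ) * (2*d) := by
      refine mul_le_mul_of_nonneg_left htAU (by positivity)
    have h4 : δ^3/(d:ℝ) * (2*(d:ℝ)) = 2 * δ^3 := by field_simp
    nlinarith
  -- decomposition of cross term
  have hsplit : (∑' n, A n * (V n * u n)) = δ * (∑' n, ε n * u n * A n)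
      + ∑' n, A n * (W n * u n) := by
    have hfe : (fun n => A n * (V n * u n))
        = fun n => δ * (ε n * u n * A n) + A n * (W n * u n) := by
      funext n; rw [hVdec n]; ring
    rw [hfe, Summable.tsum_add (hεuA.mul_left δ) hAWu, tsum_mul_left]
  -- main estimate
  have hSsum : Summable (fun n => (A n + V n * u n)^2) := by
    have hfe : (fun n => (A n + V n * u n)^2)
        = fun n => A n^2 + (2 * (A n * (V n * u n)) + (V n * u n)^2) := by
      funext n; ring
    rw [hfe]
    exact hA2.add ((hAVu.mul_left 2).add hVu2)
  have hmain : ((1 - δ^2/d) * δ)^2 - 4*δ^3 ≤ ∑' n, (A n + V n * u n)^2 := by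
    have hpt : ∀ n, 2 * (A n * (V n * u n)) + (V n * u n)^2 ≤ (A n + V n * u n)^2 := by
      intro n; nlinarith [sq_nonneg (A n)]
    have hs1 : Summable (fun n => 2 * (A n * (V n * u n)) + (V n * u n)^2) :=
      (hAVu.mul_left 2).add hVu2
    have h := Summable.tsum_le_tsum hpt hs1 hSsum
    rw [Summable.tsum_add (hAVu.mul_left 2) hVu2, tsum_mul_left, hsplit, hcross, mul_zero,
      zero_add] at h
    nlinarith [htVu2, htAWu]
  have hgt : (δ/2)^2 < ∑' n, (A n + V n * u n)^2 := by
    have hr : δ^2/(d:ℝ) ≤ δ^2 := div_le_self (by positivity) hd1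
    have hrpos : 0 < δ^2/(d:ℝ) := by positivity
    have h1 : (1:ℝ) - δ^2 ≤ 1 - δ^2/d := by linarith
    have h2 : (0:ℝ) ≤ 1 - δ^2 := by nlinarith
    have h5 : ((1 - δ^2)*δ)^2 ≤ ((1 - δ^2/d)*δ)^2 :=
      pow_le_pow_left₀ (mul_nonneg h2 hδ0.le) (mul_le_mul_of_nonneg_right h1 hδ0.le) 2
    have h4 : (δ/2)^2 < ((1 - δ^2)*δ)^2 - 4*δ^3 := by
      nlinarith [mul_pos (mul_pos hδ0 hδ0) hδ0, sq_nonneg (δ*δ), mul_pos hδ0 hδ0]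
    linarith [hmain, h4, h5]
  calc δ / 2 = Real.sqrt ((δ/2)^2) := (Real.sqrt_sq (by positivity)).symm
    _ < Real.sqrt (∑' n, (A n + V n * u n)^2) := Real.sqrt_lt_sqrt (by positivity) hgt
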